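/- Let R be a commutative ring and t, a ∈ R. Then for every integer m ≥ 0, Σ_{i=0}^{m} f̃_{m−i} · [m choose i]_t · (−a)^i = t^{m(m−1)/2}. -/

import Mathlib

noncomputable section
namespace ASC

/-- Gaussian binomial coefficient `[m choose i]_t`, defined by `[m choose 0]_t = 1`,
`[m choose i]_t = 0` for `i > m`, and the Pascal rule
`[m choose i]_t = [m−1 choose i]_t + t^{m−i}·[m−1 choose i−1]_t`. -/
def gbinom {R : Type*} [CommRing R] (t : R) : ℕ → ℕ → R
  | _, 0 => 1
  | 0, _ + 1 => 0
  | m + 1, i + 1 => gbinom t m (i + 1) + t ^ (m - i) * gbinom t m i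

/-- The sequence `f_i`: `f_0 = 1`, `f_1 = −(1+a)`,
`f_i = −(1+a)·f_{i−1} + a·(t^{i−1}−1)·f_{i−2}`. -/
def fseq {R : Type*} [CommRing R] (a t : R) : ℕ → R
  | 0 => 1
  | 1 => -(1 + a)
  | i + 2 => -(1 + a) * fseq a t (i + 1) + a * (t ^ (i + 1) - 1) * fseq a t i

/-- The sequence `f̃_i`: `f̃_0 = 1`, `f̃_1 = 1+a`,
`f̃_i = (1+a)·t^{i−1}·f̃_{i−1} + a·t^{i−2}·(1−t^{i−1})·f̃_{i−2}`. -/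
def ftseq {R : Type*} [CommRing R] (a t : R) : ℕ → R
  | 0 => 1
  | 1 => 1 + a
  | i + 2 => (1 + a) * t ^ (i + 1) * ftseq a t (i + 1) + a * t ^ i * (1 - t ^ (i + 1)) * ftseq a t i

/-- The multivariable Al-Salam–Carlitz polynomial
`W_p = U^{(a)}_{(1^p)} = ∑_{i=0}^p f_i·[n−p+i choose i]_t·e_{p−i}`. -/
def Wpoly {R : Type*} [CommRing R] (n : ℕ) (t a : R) (p : ℕ) : MvPolynomial (Fin n) R :=
  ∑ i ∈ Finset.range (p + 1),
    MvPolynomial.C (fseq a t i * gbinom t (n - p + i) i) * MvPolynomial.esymm (Fin n) R (p - i)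

section Aux
variable {R : Type*} [CommRing R]

lemma gbinom_zero (t : R) (m : ℕ) : gbinom t m 0 = 1 := by cases m <;> rfl

lemma gbinom_succ (t : R) (m i : ℕ) :
    gbinom t (m + 1) (i + 1) = gbinom t m (i + 1) + t ^ (m - i) * gbinom t m i := rfl

lemma gbinom_gt (t : R) : ∀ m i, m < i → gbinom t m i = 0 := by
  intro m
  induction m with
  | zero =>
    intro i hi
    match i, hi with
    | i + 1, _ => rfl
  | succ m ih =>
    intro i hi
    match i, hi with
    | i + 1, hi =>
      rw [gbinom_succ, ih (i + 1) (by omega), ih i (by omega)]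
      ring

lemma ftrec (a t : R) (k : ℕ) :
    ftseq a t (k + 1)
      = (1 + a) * t ^ k * ftseq a t k + a * t ^ (k - 1) * (1 - t ^ k) * ftseq a t (k - 1) := by
  cases k with
  | zero => simp [ftseq]
  | succ k => rfl

lemma gsym (t : R) : ∀ m j, (1 - t ^ (j + 1)) * gbinom t m (j + 1)
    = (1 - t ^ (m - j)) * gbinom t m j := by
  intro m
  induction m with
  | zero =>
    intro j
    rw [gbinom_gt t 0 (j + 1) (by omega)]
    cases j with
    | zero => simp [gbinom_zero]
    | succ j => rw [gbinom_gt t 0 (j + 1) (by omega)]; ring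
  | succ m ih =>
    intro j
    rcases lt_or_ge m j with h | h
    · -- j ≥ m + 1
      rw [gbinom_gt t (m + 1) (j + 1) (by omega)]
      rcases eq_or_lt_of_le (Nat.succ_le_of_lt h) with h' | h'
      · rw [show m + 1 - j = 0 by omega]
        simp
      · rw [gbinom_gt t (m + 1) j (by omega)]; ring
    · -- j ≤ m
      obtain ⟨d, rfl⟩ : ∃ d, m = j + d := ⟨m - j, by omega⟩
      rw [gbinom_succ]
      rw [show j + d - j = d from by omega, show j + d + 1 - j = d + 1 from by omega]
      have h1 := ih j
      rw [show j + d - j = d from by omega] at h1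
      cases j with
      | zero =>
        rw [gbinom_zero]
        have : (1 - t ^ (0 + 1)) * gbinom t (0 + d) (0 + 1) = (1 - t ^ d) * 1 := by
          rw [h1, gbinom_zero]
        rw [mul_add, this, gbinom_zero]
        rw [show d + 1 = 1 + d from by omega, pow_add]
        ring
      | succ k =>
        rw [gbinom_succ]
        rw [show k + 1 + d - k = d + 1 from by omega]
        have h2 := ih k
        rw [show k + 1 + d - k = d + 1 from by omega] at h2
        linear_combination h1 + t ^ (d + 1) * h2

lemma key (a t : R) (m : ℕ) :
    ∑ i ∈ Finset.range (m + 1),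
        t ^ (m - i) * (1 - t ^ i) * ftseq a t (m - i) * gbinom t m i * (-a) ^ i
      = ∑ i ∈ Finset.range (m + 1),
        (-a) * (t ^ (m - i - 1) * (1 - t ^ (m - i)) * ftseq a t (m - i - 1)
          * gbinom t m i * (-a) ^ i) := by
  rw [Finset.sum_range_succ'
    (fun i => t ^ (m - i) * (1 - t ^ i) * ftseq a t (m - i) * gbinom t m i * (-a) ^ i) m]
  rw [Finset.sum_range_succ]
  simp only [pow_zero, sub_self, Nat.sub_self, mul_zero, zero_mul, mul_one, add_zero, zero_add]
  apply Finset.sum_congr rfl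
  intro j hj
  have hg := gsym t m j
  rw [show m - (j + 1) = m - j - 1 from by omega]
  rw [pow_succ (-a) j]
  linear_combination (t ^ (m - j - 1) * ftseq a t (m - j - 1) * ((-a) ^ j * -a)) * hg

lemma step (a t : R) (m : ℕ) :
    ∑ i ∈ Finset.range (m + 1 + 1), ftseq a t (m + 1 - i) * gbinom t (m + 1) i * (-a) ^ i
      = t ^ m * ∑ i ∈ Finset.range (m + 1), ftseq a t (m - i) * gbinom t m i * (-a) ^ i := by
  -- split off i = 0 and use Pascal
  rw [Finset.sum_range_succ'
    (fun i => ftseq a t (m + 1 - i) * gbinom t (m + 1) i * (-a) ^ i) (m + 1)]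
  simp only [gbinom_succ, gbinom_zero, Nat.succ_sub_succ, pow_zero, mul_one, Nat.sub_zero]
  -- now goal : ∑ j in range (m+1), F (m-j) * (G m (j+1) + t^(m-j) * G m j) * (-a)^(j+1)
  --            + F (m+1) = t^m * S m
  have expand : ∀ j ∈ Finset.range (m + 1),
      ftseq a t (m - j) * (gbinom t m (j + 1) + t ^ (m - j) * gbinom t m j) * (-a) ^ (j + 1)
        = ftseq a t (m - j) * gbinom t m (j + 1) * (-a) ^ (j + 1)
          + ftseq a t (m - j) * (t ^ (m - j) * gbinom t m j) * (-a) ^ (j + 1) := by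
    intro j _; ring
  rw [Finset.sum_congr rfl expand, Finset.sum_add_distrib]
  -- first sum + F(m+1) = ∑ i in range (m+1), F (m+1-i) * G m i * (-a)^i
  have h2 : (∑ j ∈ Finset.range (m + 1),
        ftseq a t (m - j) * gbinom t m (j + 1) * (-a) ^ (j + 1)) + ftseq a t (m + 1)
      = ∑ i ∈ Finset.range (m + 1), ftseq a t (m + 1 - i) * gbinom t m i * (-a) ^ i := by
    rw [Finset.sum_range_succ'
      (fun i => ftseq a t (m + 1 - i) * gbinom t m i * (-a) ^ i) m]
    rw [Finset.sum_range_succ]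
    rw [gbinom_gt t m (m + 1) (by omega)]
    simp only [Nat.succ_sub_succ, Nat.sub_zero, gbinom_zero, pow_zero, mul_one, mul_zero,
      zero_mul, add_zero]
  rw [show ∀ x y z : R, x + y + z = (x + z) + y from by intros; ring, h2]
  -- apply ftrec termwise
  have h3 : ∀ i ∈ Finset.range (m + 1),
      ftseq a t (m + 1 - i) * gbinom t m i * (-a) ^ i
        = ((1 + a) * t ^ (m - i) * ftseq a t (m - i)
            + a * t ^ (m - i - 1) * (1 - t ^ (m - i)) * ftseq a t (m - i - 1))
          * gbinom t m i * (-a) ^ i := by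
    intro i hi
    rw [show m + 1 - i = (m - i) + 1 from by
      simp only [Finset.mem_range] at hi; omega, ftrec]
  rw [Finset.sum_congr rfl h3]
  -- now combine everything into one sum and finish with `key`
  rw [Finset.mul_sum, ← Finset.sum_add_distrib]
  have h4 : ∀ i ∈ Finset.range (m + 1),
      ((1 + a) * t ^ (m - i) * ftseq a t (m - i)
          + a * t ^ (m - i - 1) * (1 - t ^ (m - i)) * ftseq a t (m - i - 1))
        * gbinom t m i * (-a) ^ i
        + ftseq a t (m - i) * (t ^ (m - i) * gbinom t m i) * (-a) ^ (i + 1)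
      = t ^ m * (ftseq a t (m - i) * gbinom t m i * (-a) ^ i)
        + (t ^ (m - i) * (1 - t ^ i) * ftseq a t (m - i) * gbinom t m i * (-a) ^ i
          - (-a) * (t ^ (m - i - 1) * (1 - t ^ (m - i)) * ftseq a t (m - i - 1)
            * gbinom t m i * (-a) ^ i)) := by
    intro i hi
    simp only [Finset.mem_range] at hi
    obtain ⟨d, rfl⟩ : ∃ d, m = i + d := ⟨m - i, by omega⟩
    rw [show i + d - i = d from by omega, pow_succ (-a) i, pow_add t i d]
    ring
  rw [Finset.sum_congr rfl h4, Finset.sum_add_distrib, Finset.sum_sub_distrib, key a t m]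
  simp


end Aux

/-- STATEMENT 12: `∑_{i=0}^m f̃_{m−i}·[m choose i]_t·(−a)^i = t^{m(m−1)/2}`. -/
theorem statement12 {R : Type*} [CommRing R] (t a : R) (m : ℕ) :
    ∑ i ∈ Finset.range (m + 1), ftseq a t (m - i) * gbinom t m i * (-a) ^ i
      = t ^ (m * (m - 1) / 2) := by
  induction m with
  | zero => simp [ftseq, gbinom]
  | succ m ih =>
    rw [step a t m, ih, ← pow_add]
    congr 1
    have h : (m + 1) * (m + 1 - 1) = m * (m - 1) + 2 * m := by
      cases m with
      | zero => rfl
      | succ n => rw [Nat.succ_sub_one, Nat.succ_sub_one]; ring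
    rw [h, Nat.add_mul_div_left _ _ (by norm_num : 0 < 2)]
    omega

end ASC
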